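/- Let n > 12 be an integer such that 2(n−10)(11n−135) is a perfect square divisible by 16. Then a contradiction follows; i.e., there is no integer n > 12 with 2(n−10)(11n−135) a perfect square divisible by 16. -/

import Mathlib

/-- If `a * b = t ^ 2` with `a > 0` and `gcd a b ∣ 25`, then `a = g * r ^ 2` with
`g ∈ {1, 5, 25}`. -/
lemma aux14 (a b t : ℤ) (ha : 0 < a) (hab : a * b = t ^ 2)
    (h25 : (Int.gcd a b : ℤ) ∣ 25) :
    ∃ g r : ℤ, (g = 1 ∨ g = 5 ∨ g = 25) ∧ a = g * r ^ 2 := by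
  set d : ℤ := (Int.gcd a b : ℤ) with hd
  have hg : 0 < Int.gcd a b := by
    apply Nat.pos_of_ne_zero
    simp only [Ne, Int.gcd_eq_zero_iff]
    intro h; omega
  have hdpos : 0 < d := by rw [hd]; exact_mod_cast hg
  have hda : d ∣ a := Int.gcd_dvd_left a b
  have hdb : d ∣ b := Int.gcd_dvd_right a b
  obtain ⟨a1, ha1⟩ := hda
  obtain ⟨b1, hb1⟩ := hdb
  have ha1' : a1 = a / d := by rw [ha1]; exact (Int.mul_ediv_cancel_left _ hdpos.ne').symm
  have hb1' : b1 = b / d := by rw [hb1]; exact (Int.mul_ediv_cancel_left _ hdpos.ne').symm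
  have hcop : IsCoprime a1 b1 := by
    rw [Int.isCoprime_iff_gcd_eq_one, ha1', hb1']
    exact Int.gcd_div_gcd_div_gcd hg
  have hd2 : d ^ 2 * (a1 * b1) = t ^ 2 := by rw [← hab, ha1, hb1]; ring
  have hdt : d ∣ t := by
    have : d ^ 2 ∣ t ^ 2 := ⟨a1 * b1, hd2.symm⟩
    exact (Int.pow_dvd_pow_iff two_ne_zero).mp this
  obtain ⟨s, hs⟩ := hdt
  have hab1 : a1 * b1 = s ^ 2 := by
    have h2 : d ^ 2 * (a1 * b1) = d ^ 2 * s ^ 2 := by rw [hd2, hs]; ring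
    exact mul_left_cancel₀ (pow_ne_zero _ hdpos.ne') h2
  obtain ⟨r, hr⟩ := Int.sq_of_isCoprime hcop hab1
  have ha1pos : 0 < a1 := by
    rcases (mul_pos_iff.mp (ha1 ▸ ha)) with ⟨_, h⟩ | ⟨h, _⟩
    · exact h
    · exact absurd hdpos (not_lt.mpr h.le)
  have hr2 : a1 = r ^ 2 := by
    rcases hr with h | h
    · exact h
    · nlinarith [sq_nonneg r]
  refine ⟨d, r, ?_, by rw [ha1, hr2]⟩
  have hle : d ≤ 25 := Int.le_of_dvd (by norm_num) h25
  interval_cases d <;> omega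

/-- There is no integer `n > 12` such that `2(n−10)(11n−135)` is a perfect square
divisible by 16. -/
theorem stmt14 (n : ℤ) (hn : 12 < n) (m : ℤ)
    (hsq : 2 * (n - 10) * (11 * n - 135) = m ^ 2)
    (hdvd : (16 : ℤ) ∣ 2 * (n - 10) * (11 * n - 135)) : False := by
  set a : ℤ := n - 10 with hadef
  set b : ℤ := 11 * n - 135 with hbdef
  have ha : 0 < a := by omega
  have hb : 0 < b := by omega
  -- 4 ∣ m
  obtain ⟨t, ht⟩ : (4 : ℤ) ∣ m := by
    have h16 : (16 : ℤ) ∣ m ^ 2 := hsq ▸ hdvd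
    have h4 : (4 : ℤ) ^ 2 ∣ m ^ 2 := by norm_num; exact h16
    exact (Int.pow_dvd_pow_iff two_ne_zero).mp h4
  have hab : a * b = 8 * t ^ 2 := by
    have h1 : 2 * (a * b) = 16 * t ^ 2 := by rw [ht] at hsq; linear_combination hsq
    linarith
  have hgcd25 : (Int.gcd a b : ℤ) ∣ 25 := by
    have h1 : (Int.gcd a b : ℤ) ∣ a := Int.gcd_dvd_left a b
    have h2 : (Int.gcd a b : ℤ) ∣ b := Int.gcd_dvd_right a b
    have h3 : (Int.gcd a b : ℤ) ∣ 11 * a - b := dvd_sub (h1.mul_left 11) h2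
    have he : 11 * a - b = 25 := by omega
    rwa [he] at h3
  have h8ab : (8 : ℤ) ∣ a * b := ⟨t ^ 2, hab⟩
  rcases Int.even_or_odd n with hpar | hpar
  · -- n even : b odd, 8 ∣ a, apply aux to b
    have hbodd : ¬ (2 : ℤ) ∣ b := by
      obtain ⟨k, hk⟩ := hpar; omega
    have hcop8 : IsCoprime (8 : ℤ) b := by
      have h2 : IsCoprime (2 : ℤ) b := (Int.prime_two.coprime_iff_not_dvd).mpr hbodd
      have : IsCoprime ((2 : ℤ) ^ 3) b := h2.pow_left
      norm_num at this; exact this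
    obtain ⟨a', ha'⟩ : (8 : ℤ) ∣ a := hcop8.dvd_of_dvd_mul_right h8ab
    have hba' : b * a' = t ^ 2 := by
      have h8 : (8 : ℤ) * (b * a') = 8 * t ^ 2 := by rw [← hab, ha']; ring
      exact mul_left_cancel₀ (by norm_num) h8
    have hg' : (Int.gcd b a' : ℤ) ∣ 25 := by
      refine dvd_trans ?_ hgcd25
      rw [Int.gcd_comm a b]
      exact Int.dvd_coe_gcd (Int.gcd_dvd_left _ _) ((Int.gcd_dvd_right _ _).trans ⟨8, by rw [ha']; ring⟩)
    obtain ⟨g, r, hgval, hbg⟩ := aux14 b a' t hb hba' hg'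
    -- contradiction mod 8
    have hA : ((n : ZMod 8) - 10 = 0) := by
      have : ((a : ℤ) : ZMod 8) = 0 := by
        rw [ZMod.intCast_zmod_eq_zero_iff_dvd]; exact ⟨a', ha'⟩
      rw [hadef] at this; push_cast at this; exact this
    have hB : (11 * (n : ZMod 8) - 135 = (g : ZMod 8) * (r : ZMod 8) ^ 2) := by
      have : ((b : ℤ) : ZMod 8) = ((g * r ^ 2 : ℤ) : ZMod 8) := by rw [hbg]
      rw [hbdef] at this; push_cast at this; push_cast
      exact this
    rcases hgval with h | h | h <;> subst h <;>
      · revert hB hA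
        generalize (n : ZMod 8) = x
        generalize (r : ZMod 8) = y
        revert x y
        decide
  · -- n odd : a odd, 8 ∣ b, apply aux to a
    have haodd : ¬ (2 : ℤ) ∣ a := by
      obtain ⟨k, hk⟩ := hpar; omega
    have hcop8 : IsCoprime (8 : ℤ) a := by
      have h2 : IsCoprime (2 : ℤ) a := (Int.prime_two.coprime_iff_not_dvd).mpr haodd
      have : IsCoprime ((2 : ℤ) ^ 3) a := h2.pow_left
      norm_num at this; exact this
    obtain ⟨b', hb'⟩ : (8 : ℤ) ∣ b := hcop8.dvd_of_dvd_mul_left h8ab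
    have hab' : a * b' = t ^ 2 := by
      have h8 : (8 : ℤ) * (a * b') = 8 * t ^ 2 := by rw [← hab, hb']; ring
      exact mul_left_cancel₀ (by norm_num) h8
    have hg' : (Int.gcd a b' : ℤ) ∣ 25 := by
      refine dvd_trans ?_ hgcd25
      exact Int.dvd_coe_gcd (Int.gcd_dvd_left _ _) ((Int.gcd_dvd_right _ _).trans ⟨8, by rw [hb']; ring⟩)
    obtain ⟨g, r, hgval, hag⟩ := aux14 a b' t ha hab' hg'
    have hB : (11 * (n : ZMod 8) - 135 = 0) := by
      have : ((b : ℤ) : ZMod 8) = 0 := by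
        rw [ZMod.intCast_zmod_eq_zero_iff_dvd]; exact ⟨b', hb'⟩
      rw [hbdef] at this; push_cast at this; exact this
    have hA : ((n : ZMod 8) - 10 = (g : ZMod 8) * (r : ZMod 8) ^ 2) := by
      have : ((a : ℤ) : ZMod 8) = ((g * r ^ 2 : ℤ) : ZMod 8) := by rw [hag]
      rw [hadef] at this; push_cast at this; push_cast
      exact this
    rcases hgval with h | h | h <;> subst h <;>
      · revert hB hA
        generalize (n : ZMod 8) = x
        generalize (r : ZMod 8) = y
        revert x y
        decide
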